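/- Let H be a 2-shifted clique with segments V_1 < V_2, each inducing a clique, such that for u < u' in V_2, N(u') ∩ V_1 ⊆ N(u) ∩ V_1. Suppose φ : G → H is an ordered homomorphism, X = φ⁻¹(V_2), and f : G[X] → H[V_2] is an ordered homomorphism with f(u) ≤ φ(u) for all u ∈ X. Then the map φ' defined by φ'(u) = f(u) for u ∈ X and φ'(u) = φ(u) otherwise is an ordered homomorphism from G to H. -/
import Mathlib


/-- Replacement lemma for 2-shifted cliques: replacing the part of an ordered
homomorphism `φ` mapping into the last segment `V₂` by a smaller ordered
homomorphism `f` again yields an ordered homomorphism. -/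
theorem stmt_13 {V W : Type*} [LinearOrder V] [LinearOrder W]
    (G : SimpleGraph V) (H : SimpleGraph W) (V₁ V₂ : Set W)
    (hpart : ∀ w, (w ∈ V₁ ∧ w ∉ V₂) ∨ (w ∈ V₂ ∧ w ∉ V₁))
    (horder : ∀ a ∈ V₁, ∀ b ∈ V₂, a < b)
    (hclique1 : ∀ a ∈ V₁, ∀ b ∈ V₁, a ≠ b → H.Adj a b)
    (hclique2 : ∀ a ∈ V₂, ∀ b ∈ V₂, a ≠ b → H.Adj a b)
    (hshift : ∀ u ∈ V₂, ∀ u' ∈ V₂, u < u' → ∀ w ∈ V₁, H.Adj w u' → H.Adj w u)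
    (φ : V → W) (hφmono : Monotone φ)
    (hφhom : ∀ u v, G.Adj u v → H.Adj (φ u) (φ v))
    (X : Set V) (hX : X = φ ⁻¹' V₂)
    (f : V → W) (hfV2 : ∀ u ∈ X, f u ∈ V₂)
    (hfmono : ∀ u ∈ X, ∀ v ∈ X, u ≤ v → f u ≤ f v)
    (hfhom : ∀ u ∈ X, ∀ v ∈ X, G.Adj u v → H.Adj (f u) (f v))
    (hfle : ∀ u ∈ X, f u ≤ φ u)
    (φ' : V → W) (hφ'X : ∀ u ∈ X, φ' u = f u) (hφ'nX : ∀ u ∉ X, φ' u = φ u) :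
    Monotone φ' ∧ ∀ u v, G.Adj u v → H.Adj (φ' u) (φ' v) := by
  subst hX
  -- X is an up-set
  have hup : ∀ u ∈ φ ⁻¹' V₂, ∀ v, u ≤ v → v ∈ φ ⁻¹' V₂ := by
    intro u hu v huv
    rcases hpart (φ v) with ⟨h1, h2⟩ | ⟨h1, _⟩
    · exact absurd (hφmono huv) (not_le_of_gt (horder _ h1 _ hu))
    · exact h1
  have hV1 : ∀ u, u ∉ φ ⁻¹' V₂ → φ u ∈ V₁ := by
    intro u hu
    rcases hpart (φ u) with ⟨h1, _⟩ | ⟨h1, _⟩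
    · exact h1
    · exact absurd h1 hu
  constructor
  · intro u v huv
    by_cases hu : u ∈ φ ⁻¹' V₂
    · have hv := hup u hu v huv
      rw [hφ'X u hu, hφ'X v hv]
      exact hfmono u hu v hv huv
    · by_cases hv : v ∈ φ ⁻¹' V₂
      · rw [hφ'nX u hu, hφ'X v hv]
        exact le_of_lt (horder _ (hV1 u hu) _ (hfV2 v hv))
      · rw [hφ'nX u hu, hφ'nX v hv]
        exact hφmono huv
  · have key : ∀ u v, G.Adj u v → u ∈ φ ⁻¹' V₂ → v ∉ φ ⁻¹' V₂ →
        H.Adj (φ' u) (φ' v) := by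
      intro u v huv hu hv
      rw [hφ'X u hu, hφ'nX v hv]
      have hadj : H.Adj (φ v) (φ u) := (hφhom u v huv).symm
      rcases lt_or_eq_of_le (hfle u hu) with hlt | heq
      · exact (hshift _ (hfV2 u hu) _ hu hlt _ (hV1 v hv) hadj).symm
      · rw [heq]; exact hadj.symm
    intro u v huv
    by_cases hu : u ∈ φ ⁻¹' V₂ <;> by_cases hv : v ∈ φ ⁻¹' V₂
    · rw [hφ'X u hu, hφ'X v hv]; exact hfhom u hu v hv huv
    · exact key u v huv hu hv
    · exact (key v u huv.symm hv hu).symm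
    · rw [hφ'nX u hu, hφ'nX v hv]; exact hφhom u v huv
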